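/- arXiv:1804.01968 — 3 statements merged into one kernel-verified Lean document; each statement's English description precedes it below -/
import Mathlib

section
/- Let l₁,l₂,l₃,n₁,n₂,n₃ be nonnegative integers with n_i ≤ min(l_{i+1}, l_{i+2}) for all i (indices mod 3). Define, for each i, M_i := 1 + l_i + max(0, ⌊(n_i - max(n_{i+1}, n_{i+2}))/2⌋) and d_i := 1 + l_{i+1} + l_{i+2} - n_i. Then for each i one has max(M_{i+1}, M_{i+2}) ≤ d_i ≤ M_{i+1} + M_{i+2} and d_{i+1} + d_{i+2} ≤ 2 M_i + d_i + 1. -/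
set_option maxHeartbeats 2000000 in

theorem stmt_7 (l1 l2 l3 n1 n2 n3 : ℤ)
    (hl1 : 0 ≤ l1) (hl2 : 0 ≤ l2) (hl3 : 0 ≤ l3)
    (hn1 : 0 ≤ n1) (hn2 : 0 ≤ n2) (hn3 : 0 ≤ n3)
    (h1 : n1 ≤ min l2 l3) (h2 : n2 ≤ min l3 l1) (h3 : n3 ≤ min l1 l2)
    (M1 M2 M3 d1 d2 d3 : ℤ)
    (hM1 : M1 = 1 + l1 + max 0 (Int.fdiv (n1 - max n2 n3) 2))
    (hM2 : M2 = 1 + l2 + max 0 (Int.fdiv (n2 - max n3 n1) 2))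
    (hM3 : M3 = 1 + l3 + max 0 (Int.fdiv (n3 - max n1 n2) 2))
    (hd1 : d1 = 1 + l2 + l3 - n1)
    (hd2 : d2 = 1 + l3 + l1 - n2)
    (hd3 : d3 = 1 + l1 + l2 - n3) :
    (max M2 M3 ≤ d1 ∧ d1 ≤ M2 + M3) ∧
    (max M3 M1 ≤ d2 ∧ d2 ≤ M3 + M1) ∧
    (max M1 M2 ≤ d3 ∧ d3 ≤ M1 + M2) ∧
    (d2 + d3 ≤ 2 * M1 + d1 + 1) ∧
    (d3 + d1 ≤ 2 * M2 + d2 + 1) ∧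
    (d1 + d2 ≤ 2 * M3 + d3 + 1) := by
  have e1 : Int.fdiv (n1 - max n2 n3) 2 = (n1 - max n2 n3) / 2 :=
    Int.fdiv_eq_ediv_of_nonneg _ (by norm_num)
  have e2 : Int.fdiv (n2 - max n3 n1) 2 = (n2 - max n3 n1) / 2 :=
    Int.fdiv_eq_ediv_of_nonneg _ (by norm_num)
  have e3 : Int.fdiv (n3 - max n1 n2) 2 = (n3 - max n1 n2) / 2 :=
    Int.fdiv_eq_ediv_of_nonneg _ (by norm_num)
  rw [e1] at hM1; rw [e2] at hM2; rw [e3] at hM3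
  set a := max n2 n3 with ha
  set b := max n3 n1 with hb
  set c := max n1 n2 with hc
  have q1 : 2 * ((n1 - a) / 2) ≤ n1 - a ∧ n1 - a ≤ 2 * ((n1 - a) / 2) + 1 := by omega
  have q2 : 2 * ((n2 - b) / 2) ≤ n2 - b ∧ n2 - b ≤ 2 * ((n2 - b) / 2) + 1 := by omega
  have q3 : 2 * ((n3 - c) / 2) ≤ n3 - c ∧ n3 - c ≤ 2 * ((n3 - c) / 2) + 1 := by omega
  have ha' : n2 ≤ a ∧ n3 ≤ a ∧ (a = n2 ∨ a = n3) := by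
    refine ⟨le_max_left _ _, le_max_right _ _, ?_⟩
    rcases le_total n2 n3 with h | h
    · exact Or.inr (by rw [ha, max_eq_right h])
    · exact Or.inl (by rw [ha, max_eq_left h])
  have hb' : n3 ≤ b ∧ n1 ≤ b ∧ (b = n3 ∨ b = n1) := by
    refine ⟨le_max_left _ _, le_max_right _ _, ?_⟩
    rcases le_total n3 n1 with h | h
    · exact Or.inr (by rw [hb, max_eq_right h])
    · exact Or.inl (by rw [hb, max_eq_left h])
  have hc' : n1 ≤ c ∧ n2 ≤ c ∧ (c = n1 ∨ c = n2) := by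
    refine ⟨le_max_left _ _, le_max_right _ _, ?_⟩
    rcases le_total n1 n2 with h | h
    · exact Or.inr (by rw [hc, max_eq_right h])
    · exact Or.inl (by rw [hc, max_eq_left h])
  have h1' : n1 ≤ l2 ∧ n1 ≤ l3 := ⟨le_trans h1 (min_le_left _ _), le_trans h1 (min_le_right _ _)⟩
  have h2' : n2 ≤ l3 ∧ n2 ≤ l1 := ⟨le_trans h2 (min_le_left _ _), le_trans h2 (min_le_right _ _)⟩
  have h3' : n3 ≤ l1 ∧ n3 ≤ l2 := ⟨le_trans h3 (min_le_left _ _), le_trans h3 (min_le_right _ _)⟩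
  clear h1 h2 h3 ha hb hc e1 e2 e3
  generalize (n1 - a) / 2 = x1 at *
  generalize (n2 - b) / 2 = x2 at *
  generalize (n3 - c) / 2 = x3 at *
  simp only [max_le_iff]
  omega
end

section
/- Let τ = (a,b,c,d,e,f) and τ' = (a',b',c',d',e',f') be two sextuples of nonnegative integers, both satisfying condition (T₁) (i.e., max(b,c) ≤ d ≤ b+c, max(a,c) ≤ e ≤ a+c, max(a,b) ≤ f ≤ a+b, and similarly for τ'). If the sets P_τ and P_{τ'} are equal, where P_τ is the set of triples (x,y,z) of nonnegative integers with x ≤ a, y ≤ b, z ≤ c, y+z ≤ d, x+z ≤ e, x+y ≤ f, then τ = τ'. -/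
def latticePolytope (a b c d e f : ℕ) : Set (ℕ × ℕ × ℕ) :=
  {p | p.1 ≤ a ∧ p.2.1 ≤ b ∧ p.2.2 ≤ c ∧
       p.2.1 + p.2.2 ≤ d ∧ p.1 + p.2.2 ≤ e ∧ p.1 + p.2.1 ≤ f}

lemma le_of_polytope_subset (a b c d e f a' b' c' d' e' f' : ℕ)
    (hd : max b c ≤ d ∧ d ≤ b + c)
    (he : max a c ≤ e ∧ e ≤ a + c)
    (hf : max a b ≤ f ∧ f ≤ a + b)
    (h : latticePolytope a b c d e f ⊆ latticePolytope a' b' c' d' e' f') :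
    a ≤ a' ∧ b ≤ b' ∧ c ≤ c' ∧ d ≤ d' ∧ e ≤ e' ∧ f ≤ f' := by
  simp only [max_le_iff] at hd he hf
  have h1 := h (show (a, 0, 0) ∈ latticePolytope a b c d e f by
    simp only [latticePolytope, Set.mem_setOf_eq]; omega)
  have h2 := h (show (0, b, 0) ∈ latticePolytope a b c d e f by
    simp only [latticePolytope, Set.mem_setOf_eq]; omega)
  have h3 := h (show (0, 0, c) ∈ latticePolytope a b c d e f by
    simp only [latticePolytope, Set.mem_setOf_eq]; omega)
  have h4 := h (show (0, d - c, c) ∈ latticePolytope a b c d e f by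
    simp only [latticePolytope, Set.mem_setOf_eq]; omega)
  have h5 := h (show (e - c, 0, c) ∈ latticePolytope a b c d e f by
    simp only [latticePolytope, Set.mem_setOf_eq]; omega)
  have h6 := h (show (f - b, b, 0) ∈ latticePolytope a b c d e f by
    simp only [latticePolytope, Set.mem_setOf_eq]; omega)
  simp only [latticePolytope, Set.mem_setOf_eq] at h1 h2 h3 h4 h5 h6
  omega

theorem stmt_11 (a b c d e f a' b' c' d' e' f' : ℕ)
    (hd : max b c ≤ d ∧ d ≤ b + c)
    (he : max a c ≤ e ∧ e ≤ a + c)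
    (hf : max a b ≤ f ∧ f ≤ a + b)
    (hd' : max b' c' ≤ d' ∧ d' ≤ b' + c')
    (he' : max a' c' ≤ e' ∧ e' ≤ a' + c')
    (hf' : max a' b' ≤ f' ∧ f' ≤ a' + b')
    (hP : latticePolytope a b c d e f = latticePolytope a' b' c' d' e' f') :
    a = a' ∧ b = b' ∧ c = c' ∧ d = d' ∧ e = e' ∧ f = f' := by
  have h1 := le_of_polytope_subset a b c d e f a' b' c' d' e' f' hd he hf hP.le
  have h2 := le_of_polytope_subset a' b' c' d' e' f' a b c d e f hd' he' hf' hP.ge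
  omega
end

section
/- Let μ₁,μ₂,μ₃ be nonnegative integers and δ₁,δ₂,δ₃ positive integers satisfying conditions (T₁) and (T₂). Define ν_i = μ_{i+1}+μ_{i+2}-δ_i, and suppose ν₃ ≤ ν₂ ≤ ν₁. Then exactly one of the following four cases holds: (i) ν₂ < ν₁ ≤ μ₁+ν₂; (ii) ν₁ = ν₂ and ν₃ ≥ 1; (iii) ν₁ = ν₂, ν₃ = 0; (iv) ν₁ > μ₁+ν₂; and in case (iv) one has ν₁ = 2μ₁+1, ν₂ = ν₃ = μ₁. -/
theorem stmt_16 (μ1 μ2 μ3 δ1 δ2 δ3 ν1 ν2 ν3 : ℤ)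
    (hμ1 : 0 ≤ μ1) (hμ2 : 0 ≤ μ2) (hμ3 : 0 ≤ μ3)
    (hδ1 : 1 ≤ δ1) (hδ2 : 1 ≤ δ2) (hδ3 : 1 ≤ δ3)
    (hT1a : max μ2 μ3 ≤ δ1 ∧ δ1 ≤ μ2 + μ3)
    (hT1b : max μ3 μ1 ≤ δ2 ∧ δ2 ≤ μ3 + μ1)
    (hT1c : max μ1 μ2 ≤ δ3 ∧ δ3 ≤ μ1 + μ2)
    (hT2a : δ2 + δ3 ≤ 2 * μ1 + δ1 + 1)
    (hT2b : δ3 + δ1 ≤ 2 * μ2 + δ2 + 1)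
    (hT2c : δ1 + δ2 ≤ 2 * μ3 + δ3 + 1)
    (hν1 : ν1 = μ2 + μ3 - δ1) (hν2 : ν2 = μ3 + μ1 - δ2) (hν3 : ν3 = μ1 + μ2 - δ3)
    (h32 : ν3 ≤ ν2) (h21 : ν2 ≤ ν1) :
    (((ν2 < ν1 ∧ ν1 ≤ μ1 + ν2) ∧ ¬(ν1 = ν2 ∧ 1 ≤ ν3) ∧ ¬(ν1 = ν2 ∧ ν3 = 0) ∧ ¬(μ1 + ν2 < ν1)) ∨
     (¬(ν2 < ν1 ∧ ν1 ≤ μ1 + ν2) ∧ (ν1 = ν2 ∧ 1 ≤ ν3) ∧ ¬(ν1 = ν2 ∧ ν3 = 0) ∧ ¬(μ1 + ν2 < ν1)) ∨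
     (¬(ν2 < ν1 ∧ ν1 ≤ μ1 + ν2) ∧ ¬(ν1 = ν2 ∧ 1 ≤ ν3) ∧ (ν1 = ν2 ∧ ν3 = 0) ∧ ¬(μ1 + ν2 < ν1)) ∨
     (¬(ν2 < ν1 ∧ ν1 ≤ μ1 + ν2) ∧ ¬(ν1 = ν2 ∧ 1 ≤ ν3) ∧ ¬(ν1 = ν2 ∧ ν3 = 0) ∧ (μ1 + ν2 < ν1))) ∧
    (μ1 + ν2 < ν1 → ν1 = 2 * μ1 + 1 ∧ ν2 = μ1 ∧ ν3 = μ1) := by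
  simp only [max_le_iff] at *
  omega
end
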